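/- Fix an integer m > 1. As λ → ∞ (λ real, λ > 0), the following asymptotic equivalences hold: var_S(Φ_m) = ((2m+2λ+1)/(2m))² − 1 ~ λ²/m²; var_M(Φ_m) = m(m+2λ+1)(2λ+1)/(2λ+3) ~ 2mλ; and the uncertainty product U(Φ_m) = √(var_S(Φ_m))·√(var_M(Φ_m)) ~ (2/m)^{1/2}·λ^{3/2}. -/

import Mathlib

open Real Filter

/-- Asymptotic behavior, as `λ → ∞` (real `λ`) for a fixed scale `m > 1`, of the space
variance `var_S(Φ_m) = ((2m+2λ+1)/(2m))² − 1`, the momentum variance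
`var_M(Φ_m) = m(m+2λ+1)(2λ+1)/(2λ+3)` and the uncertainty product
`U(Φ_m) = √(var_S(Φ_m))·√(var_M(Φ_m))` of the weighted scaling functions. -/
theorem asymptotics_in_dimension (m : ℕ) (hm : 1 < m) :
    Tendsto (fun lam : ℝ =>
        (((2 * (m : ℝ) + 2 * lam + 1) / (2 * (m : ℝ))) ^ 2 - 1) / (lam ^ 2 / (m : ℝ) ^ 2))
        atTop (nhds 1) ∧
      Tendsto (fun lam : ℝ =>
          ((m : ℝ) * ((m : ℝ) + 2 * lam + 1) * (2 * lam + 1) / (2 * lam + 3)) /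
            (2 * (m : ℝ) * lam))
          atTop (nhds 1) ∧
        Tendsto (fun lam : ℝ =>
            (Real.sqrt ((((2 * (m : ℝ) + 2 * lam + 1) / (2 * (m : ℝ))) ^ 2 - 1)) *
                Real.sqrt ((m : ℝ) * ((m : ℝ) + 2 * lam + 1) * (2 * lam + 1) / (2 * lam + 3))) /
              (Real.sqrt (2 / (m : ℝ)) * lam ^ ((3 : ℝ) / 2)))
            atTop (nhds 1) := by
  have hm0 : (0:ℝ) < m := by positivity
  have hm0' : (m:ℝ) ≠ 0 := hm0.ne'
  have hinv : Tendsto (fun lam : ℝ => lam⁻¹) atTop (nhds 0) := tendsto_inv_atTop_zero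
  -- first limit
  have h1 : Tendsto (fun lam : ℝ =>
      (((2 * (m : ℝ) + 2 * lam + 1) / (2 * (m : ℝ))) ^ 2 - 1) / (lam ^ 2 / (m : ℝ) ^ 2))
      atTop (nhds 1) := by
    have hg : Tendsto (fun lam : ℝ => 1 + (2*(m:ℝ)+1) * lam⁻¹ + (((2*(m:ℝ)+1)^2 - 4*(m:ℝ)^2)/4) * lam⁻¹^2)
        atTop (nhds 1) := by
      have : Tendsto (fun lam : ℝ => 1 + (2*(m:ℝ)+1) * lam⁻¹ + (((2*(m:ℝ)+1)^2 - 4*(m:ℝ)^2)/4) * lam⁻¹^2)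
          atTop (nhds (1 + (2*(m:ℝ)+1) * 0 + (((2*(m:ℝ)+1)^2 - 4*(m:ℝ)^2)/4) * 0^2)) := by
        exact ((tendsto_const_nhds.add (hinv.const_mul _)).add ((hinv.pow 2).const_mul _))
      simpa using this
    refine hg.congr' ?_
    filter_upwards [eventually_gt_atTop 0] with lam hlam
    have hl : lam ≠ 0 := hlam.ne'
    field_simp
    ring
  -- second limit
  have h2 : Tendsto (fun lam : ℝ =>
      ((m : ℝ) * ((m : ℝ) + 2 * lam + 1) * (2 * lam + 1) / (2 * lam + 3)) /
        (2 * (m : ℝ) * lam)) atTop (nhds 1) := by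
    have hg : Tendsto (fun lam : ℝ =>
        ((((m:ℝ)+1) * lam⁻¹ + 2) * (2 + lam⁻¹)) / ((2 + 3 * lam⁻¹) * 2)) atTop (nhds 1) := by
      have hnum : Tendsto (fun lam : ℝ => (((m:ℝ)+1) * lam⁻¹ + 2) * (2 + lam⁻¹)) atTop
          (nhds ((((m:ℝ)+1) * 0 + 2) * (2 + 0))) :=
        ((hinv.const_mul _).add tendsto_const_nhds).mul (tendsto_const_nhds.add hinv)
      have hden : Tendsto (fun lam : ℝ => (2 + 3 * lam⁻¹) * 2) atTop
          (nhds ((2 + 3 * 0) * 2)) :=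
        (tendsto_const_nhds.add (hinv.const_mul _)).mul tendsto_const_nhds
      convert hnum.div hden (by norm_num) using 2 <;> norm_num
    refine hg.congr' ?_
    filter_upwards [eventually_gt_atTop 0] with lam hlam
    have hl : lam ≠ 0 := hlam.ne'
    have h3 : 2 * lam + 3 ≠ 0 := by nlinarith
    field_simp
    ring
  refine ⟨h1, h2, ?_⟩
  -- third
  have hprod : Tendsto (fun lam : ℝ =>
      ((((2 * (m : ℝ) + 2 * lam + 1) / (2 * (m : ℝ))) ^ 2 - 1) / (lam ^ 2 / (m : ℝ) ^ 2)) *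
      (((m : ℝ) * ((m : ℝ) + 2 * lam + 1) * (2 * lam + 1) / (2 * lam + 3)) /
        (2 * (m : ℝ) * lam))) atTop (nhds 1) := by simpa using h1.mul h2
  have hs := hprod.sqrt
  rw [Real.sqrt_one] at hs
  refine hs.congr' ?_
  filter_upwards [eventually_gt_atTop 0] with lam hlam
  have hl : lam ≠ 0 := hlam.ne'
  have ha : (0:ℝ) ≤ ((2 * (m : ℝ) + 2 * lam + 1) / (2 * (m : ℝ))) ^ 2 - 1 := by
    have h1le : (1:ℝ) ≤ (2 * (m : ℝ) + 2 * lam + 1) / (2 * (m : ℝ)) := by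
      rw [le_div_iff₀ (by positivity)]
      nlinarith
    nlinarith
  have hb : (0:ℝ) ≤ (m : ℝ) * ((m : ℝ) + 2 * lam + 1) * (2 * lam + 1) / (2 * lam + 3) := by
    positivity
  have hc : (0:ℝ) < 2 / (m:ℝ) * lam ^ 3 := by positivity
  have hlp : lam ^ ((3:ℝ)/2) = Real.sqrt (lam ^ 3) := by
    rw [Real.sqrt_eq_rpow, ← Real.rpow_natCast lam 3, ← Real.rpow_mul hlam.le]
    norm_num
  rw [hlp, ← Real.sqrt_mul (by positivity : (0:ℝ) ≤ 2/(m:ℝ)), ← Real.sqrt_mul ha,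
    ← Real.sqrt_div (by positivity)]
  congr 1
  have h3 : (2:ℝ) * lam + 3 ≠ 0 := by nlinarith
  field_simp
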